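/- arXiv:2505.00793 — 6 statements merged into one kernel-verified Lean document; each statement's English description precedes it below -/
import Mathlib

section
/- Let P, O, M be natural numbers. Let L : ℝ^P × ℝ^M → ℝ be twice continuously differentiable (ContDiff ℝ 2), and define the inner-gradient map g : ℝ^P × ℝ^M → ℝ^P by g (θ', η') = gradient (fun t => L (t, η')) θ'. Let θ : ℝ^M → ℝ^P and υ : ℝ^M → ℝ^O be differentiable at η, and let Υ : ℝ^P × ℝ^P × ℝ^O × ℝ^M → ℝ^P × ℝ^O be differentiable at the point z := (g (θ η, η), θ η, υ η, η). Then the reparameterised one-step update map Φ : η' ↦ Υ (g (θ η', η'), θ η', υ η', η') is differentiable at η, and its Fréchet derivative at η equals D₁ ∘ (H ∘ Dθ + X) + D₂ ∘ Dθ + D₃ ∘ Dυ + D₄, where Dθ = fderiv ℝ θ η, Dυ = fderiv ℝ υ η, D_k is the partial Fréchet derivative of Υ at z with respect to its k-th argument (the composition of fderiv ℝ Υ z with the continuous linear inclusion of the k-th factor), H = fderiv ℝ (fun t => g (t, η)) (θ η) is the Hessian ∂²L/∂θ² at (θ η, η), and X = fderiv ℝ (fun η' => g (θ η, η')) η is the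 mixed second derivative ∂²L/∂η∂θ at (θ η, η). -/
/-- Equation (5) of the paper: one-step recurrence for the total
derivative of the reparameterised inner update `Υ(∇L, θ, υ, η)` with respect
to the meta-parameters. With `g (θ', η') := ∇_θ L(θ', η')` the inner-gradient
map, `z := (g (θ η, η), θ η, υ η, η)`, `D_k` the partial Fréchet derivative of
`Υ` at `z` in its `k`-th argument, `H := ∂²L/∂θ²` and `X := ∂²L/∂η∂θ` at
`(θ η, η)`, the map `Φ : η' ↦ Υ (g (θ η', η'), θ η', υ η', η')` is
differentiable at `η` with
`dΦ/dη = D₁ ∘ (H ∘ dθ/dη + X) + D₂ ∘ dθ/dη + D₃ ∘ dυ/dη + D₄`. -/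
theorem stmt1 (P O M : ℕ)
    (L : EuclideanSpace ℝ (Fin P) × EuclideanSpace ℝ (Fin M) → ℝ)
    (hL : ContDiff ℝ 2 L)
    (g : EuclideanSpace ℝ (Fin P) × EuclideanSpace ℝ (Fin M) → EuclideanSpace ℝ (Fin P))
    (hg : ∀ θ' η', g (θ', η') = gradient (fun t => L (t, η')) θ')
    (θ : EuclideanSpace ℝ (Fin M) → EuclideanSpace ℝ (Fin P))
    (υ : EuclideanSpace ℝ (Fin M) → EuclideanSpace ℝ (Fin O))
    (η : EuclideanSpace ℝ (Fin M))
    (hθ : DifferentiableAt ℝ θ η)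
    (hυ : DifferentiableAt ℝ υ η)
    (Υ : EuclideanSpace ℝ (Fin P) × EuclideanSpace ℝ (Fin P) × EuclideanSpace ℝ (Fin O) ×
          EuclideanSpace ℝ (Fin M) →
        EuclideanSpace ℝ (Fin P) × EuclideanSpace ℝ (Fin O))
    (z : EuclideanSpace ℝ (Fin P) × EuclideanSpace ℝ (Fin P) × EuclideanSpace ℝ (Fin O) ×
          EuclideanSpace ℝ (Fin M))
    (hz : z = (g (θ η, η), θ η, υ η, η))
    (hΥ : DifferentiableAt ℝ Υ z) :
    DifferentiableAt ℝ (fun η' => Υ (g (θ η', η'), θ η', υ η', η')) η ∧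
    fderiv ℝ (fun η' => Υ (g (θ η', η'), θ η', υ η', η')) η =
      -- D₁ ∘ (H ∘ Dθ + X)
      ((fderiv ℝ Υ z).comp
          (ContinuousLinearMap.inl ℝ (EuclideanSpace ℝ (Fin P))
            (EuclideanSpace ℝ (Fin P) × EuclideanSpace ℝ (Fin O) ×
              EuclideanSpace ℝ (Fin M)))).comp
        ((fderiv ℝ (fun t => g (t, η)) (θ η)).comp (fderiv ℝ θ η) +
          fderiv ℝ (fun η' => g (θ η, η')) η) +
      -- D₂ ∘ Dθ
      ((fderiv ℝ Υ z).comp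
          ((ContinuousLinearMap.inr ℝ (EuclideanSpace ℝ (Fin P))
              (EuclideanSpace ℝ (Fin P) × EuclideanSpace ℝ (Fin O) ×
                EuclideanSpace ℝ (Fin M))).comp
            (ContinuousLinearMap.inl ℝ (EuclideanSpace ℝ (Fin P))
              (EuclideanSpace ℝ (Fin O) × EuclideanSpace ℝ (Fin M))))).comp
        (fderiv ℝ θ η) +
      -- D₃ ∘ Dυ
      ((fderiv ℝ Υ z).comp
          ((ContinuousLinearMap.inr ℝ (EuclideanSpace ℝ (Fin P))
              (EuclideanSpace ℝ (Fin P) × EuclideanSpace ℝ (Fin O) ×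
                EuclideanSpace ℝ (Fin M))).comp
            ((ContinuousLinearMap.inr ℝ (EuclideanSpace ℝ (Fin P))
                (EuclideanSpace ℝ (Fin O) × EuclideanSpace ℝ (Fin M))).comp
              (ContinuousLinearMap.inl ℝ (EuclideanSpace ℝ (Fin O))
                (EuclideanSpace ℝ (Fin M)))))).comp
        (fderiv ℝ υ η) +
      -- D₄
      (fderiv ℝ Υ z).comp
        ((ContinuousLinearMap.inr ℝ (EuclideanSpace ℝ (Fin P))
            (EuclideanSpace ℝ (Fin P) × EuclideanSpace ℝ (Fin O) ×
              EuclideanSpace ℝ (Fin M))).comp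
          ((ContinuousLinearMap.inr ℝ (EuclideanSpace ℝ (Fin P))
              (EuclideanSpace ℝ (Fin O) × EuclideanSpace ℝ (Fin M))).comp
            (ContinuousLinearMap.inr ℝ (EuclideanSpace ℝ (Fin O))
              (EuclideanSpace ℝ (Fin M))))) := by
  subst hz
  have hL1 : Differentiable ℝ L := hL.differentiable two_ne_zero
  have hgeq : g = fun p : EuclideanSpace ℝ (Fin P) × EuclideanSpace ℝ (Fin M) =>
      (InnerProductSpace.toDual ℝ (EuclideanSpace ℝ (Fin P))).symm
        ((fderiv ℝ L p).comp
          (ContinuousLinearMap.inl ℝ (EuclideanSpace ℝ (Fin P)) (EuclideanSpace ℝ (Fin M)))) := by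
    funext p
    obtain ⟨θ', η'⟩ := p
    rw [hg θ' η']
    show (InnerProductSpace.toDual ℝ (EuclideanSpace ℝ (Fin P))).symm
        (fderiv ℝ (fun t => L (t, η')) θ') = _
    congr 1
    exact ((hL1 (θ', η')).hasFDerivAt.comp θ' (hasFDerivAt_prodMk_left θ' η')).fderiv
  have hgC : ContDiff ℝ 1 g := by
    rw [hgeq]
    refine (InnerProductSpace.toDual ℝ (EuclideanSpace ℝ (Fin P))).symm.contDiff.comp ?_
    have h2 : ContDiff ℝ 1 (fderiv ℝ L) := hL.fderiv_right (le_refl 2)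
    exact (((ContinuousLinearMap.compL ℝ (EuclideanSpace ℝ (Fin P))
      (EuclideanSpace ℝ (Fin P) × EuclideanSpace ℝ (Fin M)) ℝ).flip
      (ContinuousLinearMap.inl ℝ (EuclideanSpace ℝ (Fin P))
        (EuclideanSpace ℝ (Fin M)))).contDiff).comp h2
  have hgd : DifferentiableAt ℝ g (θ η, η) := hgC.differentiable one_ne_zero (θ η, η)
  set A := fderiv ℝ g (θ η, η) with hA
  set Dθ := fderiv ℝ θ η with hDθ
  set Dυ := fderiv ℝ υ η with hDυ
  have hH : HasFDerivAt (fun t => g (t, η))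
      (A.comp (ContinuousLinearMap.inl ℝ (EuclideanSpace ℝ (Fin P)) (EuclideanSpace ℝ (Fin M))))
      (θ η) := hgd.hasFDerivAt.comp (θ η) (hasFDerivAt_prodMk_left (θ η) η)
  have hX : HasFDerivAt (fun η' => g (θ η, η'))
      (A.comp (ContinuousLinearMap.inr ℝ (EuclideanSpace ℝ (Fin P)) (EuclideanSpace ℝ (Fin M))))
      η := hgd.hasFDerivAt.comp η (hasFDerivAt_prodMk_right (θ η) η)
  have hG : HasFDerivAt (fun η' => g (θ η', η'))
      (A.comp (Dθ.prod (ContinuousLinearMap.id ℝ (EuclideanSpace ℝ (Fin M))))) η := by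
    have hin : HasFDerivAt (fun η' => (θ η', η'))
        (Dθ.prod (ContinuousLinearMap.id ℝ (EuclideanSpace ℝ (Fin M)))) η :=
      HasFDerivAt.prodMk hθ.hasFDerivAt (hasFDerivAt_id η)
    exact HasFDerivAt.comp (f := fun η' => (θ η', η')) η hgd.hasFDerivAt hin
  have hF : HasFDerivAt (fun η' => (g (θ η', η'), θ η', υ η', η'))
      ((A.comp (Dθ.prod (ContinuousLinearMap.id ℝ (EuclideanSpace ℝ (Fin M))))).prod
        (Dθ.prod (Dυ.prod (ContinuousLinearMap.id ℝ (EuclideanSpace ℝ (Fin M)))))) η :=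
    HasFDerivAt.prodMk hG (HasFDerivAt.prodMk hθ.hasFDerivAt
      (HasFDerivAt.prodMk hυ.hasFDerivAt (hasFDerivAt_id η)))
  have hΦ : HasFDerivAt (fun η' => Υ (g (θ η', η'), θ η', υ η', η'))
      ((fderiv ℝ Υ (g (θ η, η), θ η, υ η, η)).comp
        ((A.comp (Dθ.prod (ContinuousLinearMap.id ℝ (EuclideanSpace ℝ (Fin M))))).prod
          (Dθ.prod (Dυ.prod (ContinuousLinearMap.id ℝ (EuclideanSpace ℝ (Fin M))))))) η :=
    HasFDerivAt.comp (f := fun η' => (g (θ η', η'), θ η', υ η', η')) η hΥ.hasFDerivAt hF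
  refine ⟨hΦ.differentiableAt, ?_⟩
  rw [hΦ.fderiv, hH.fderiv, hX.fderiv]
  refine ContinuousLinearMap.ext fun m => ?_
  set T := fderiv ℝ Υ (g (θ η, η), θ η, υ η, η)
  simp only [ContinuousLinearMap.comp_apply, ContinuousLinearMap.add_apply,
    ContinuousLinearMap.prod_apply, ContinuousLinearMap.id_apply,
    ContinuousLinearMap.inl_apply, ContinuousLinearMap.inr_apply]
  rw [← A.map_add]
  rw [← T.map_add, ← T.map_add, ← T.map_add]
  simp [Prod.mk_add_mk]
end

section
/- Let f : ℝ^n → ℝ be twice continuously differentiable (ContDiff ℝ 2). Then for every x, u, v ∈ ℝ^n, fderiv ℝ (fun y => fderiv ℝ f y v) x u = ⟪fderiv ℝ (gradient f) x v, u⟫. That is, the reverse-over-forward Hessian-vector product (the derivative at x in direction u of the scalar map y ↦ Df(y)[v]) coincides with the forward-over-reverse Hessian-vector product (the directional derivative of the gradient field in direction v, paired with u); all computationally tractable autodiff modes compute the same Hessian-by-vector product ∂²f/∂x² v. -/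
open scoped RealInnerProductSpace

open InnerProductSpace in
/-- The inverse of `toDual` over `ℝ`, packaged as an `ℝ`-linear continuous map. -/
noncomputable def toDualSymmCLM (F : Type*) [NormedAddCommGroup F]
    [InnerProductSpace ℝ F] [CompleteSpace F] : StrongDual ℝ F →L[ℝ] F where
  toFun := (toDual ℝ F).symm
  map_add' x y := by simp
  map_smul' r y := by
    simp [LinearIsometryEquiv.map_smulₛₗ, starRingEnd_apply, star_trivial]
  cont := (toDual ℝ F).symm.continuous

/-- for twice continuously differentiable `f : ℝ^n → ℝ`, the
reverse-over-forward Hessian-vector product (the derivative at `x` in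
direction `u` of the scalar map `y ↦ Df(y)[v]`) coincides with the
forward-over-reverse Hessian-vector product (the directional derivative of the
gradient field in direction `v`, paired with `u`): all computationally
tractable autodiff modes compute the same Hessian-by-vector product. -/
theorem stmt6 (n : ℕ) (f : EuclideanSpace ℝ (Fin n) → ℝ) (hf : ContDiff ℝ 2 f)
    (x u v : EuclideanSpace ℝ (Fin n)) :
    fderiv ℝ (fun y => fderiv ℝ f y v) x u = ⟪fderiv ℝ (gradient f) x v, u⟫ := by
  have hdf : Differentiable ℝ (fderiv ℝ f) :=
    (hf.fderiv_right (m := 1) (by norm_num)).differentiable one_ne_zero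
  -- LHS: reduce to the second derivative applied to (u, v)
  have hL : fderiv ℝ (fun y => fderiv ℝ f y v) x u = fderiv ℝ (fderiv ℝ f) x u v := by
    rw [fderiv_clm_apply (hdf x) (differentiableAt_const v)]
    simp
  -- RHS: reduce to the second derivative applied to (v, u)
  have hgrad : gradient f = fun y => toDualSymmCLM (EuclideanSpace ℝ (Fin n)) (fderiv ℝ f y) := rfl
  have hR : fderiv ℝ (gradient f) x v =
      toDualSymmCLM (EuclideanSpace ℝ (Fin n)) (fderiv ℝ (fderiv ℝ f) x v) := by
    rw [hgrad, show (fun y => toDualSymmCLM (EuclideanSpace ℝ (Fin n)) (fderiv ℝ f y))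
        = (toDualSymmCLM (EuclideanSpace ℝ (Fin n))) ∘ (fderiv ℝ f) from rfl,
      fderiv_comp x (toDualSymmCLM (EuclideanSpace ℝ (Fin n))).differentiableAt (hdf x)]
    simp
  have hdual : ∀ (L : StrongDual ℝ (EuclideanSpace ℝ (Fin n))), ⟪toDualSymmCLM (EuclideanSpace ℝ (Fin n)) L, u⟫ = L u := fun L =>
    InnerProductSpace.toDual_symm_apply
  rw [hL, hR, hdual]
  exact hf.contDiffAt.isSymmSndFDerivAt (by simp [minSmoothness_of_isRCLikeNormedField]) u v
end

section
/- Let Φ : ℝ^P × ℝ^M → ℝ^P be continuously differentiable (ContDiff ℝ 1) and let θ₀ ∈ ℝ^P. For each η ∈ ℝ^M define the unrolled iterates by θ_0(η) = θ₀ and θ_{i+1}(η) = Φ (θ_i(η), η). Fix η and write A_i := fderiv ℝ (fun t => Φ (t, η)) (θ_i(η)) and B_i := fderiv ℝ (fun η' => Φ (θ_i(η), η')) η for the partial Fréchet derivatives of Φ at the i-th iterate. Then for every T, the map η' ↦ θ_T(η') is differentiable at η and fderiv ℝ (fun η' => θ_T(η')) η = ∑_{i=0}^{T-1} (A_{T-1}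 ∘ A_{T-2} ∘ ⋯ ∘ A_{i+1}) ∘ B_i, where the composition A_{T-1} ∘ ⋯ ∘ A_{i+1} is the identity when i = T-1. -/
/-- `chainComp A i j` is the ordered composition `A (j-1) ∘ A (j-2) ∘ ⋯ ∘ A i`
of continuous linear maps, equal to the identity when `j ≤ i`. -/
noncomputable def chainComp {F : Type*} [NormedAddCommGroup F] [NormedSpace ℝ F]
    (A : ℕ → (F →L[ℝ] F)) (i : ℕ) : ℕ → (F →L[ℝ] F)
  | 0 => ContinuousLinearMap.id ℝ F
  | (j + 1) =>
      if j + 1 ≤ i then ContinuousLinearMap.id ℝ F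
      else (A j).comp (chainComp A i j)

/-- closed form of the total derivative computed by (truncated)
backpropagation through time. If `θ 0 η = θ₀` and `θ (i+1) η = Φ (θ i η, η)`,
with `A i := ∂Φ/∂θ` and `B i := ∂Φ/∂η` evaluated at the `i`-th iterate, then
`η' ↦ θ T η'` is differentiable at `η` with derivative
`∑_{i=0}^{T-1} (A_{T-1} ∘ ⋯ ∘ A_{i+1}) ∘ B_i`. -/
theorem stmt7 (P M : ℕ)
    (Φ : EuclideanSpace ℝ (Fin P) × EuclideanSpace ℝ (Fin M) → EuclideanSpace ℝ (Fin P))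
    (hΦ : ContDiff ℝ 1 Φ)
    (θ₀ : EuclideanSpace ℝ (Fin P))
    (θ : ℕ → EuclideanSpace ℝ (Fin M) → EuclideanSpace ℝ (Fin P))
    (hθ0 : ∀ η, θ 0 η = θ₀)
    (hθs : ∀ i η, θ (i + 1) η = Φ (θ i η, η))
    (η : EuclideanSpace ℝ (Fin M)) (T : ℕ) :
    DifferentiableAt ℝ (fun η' => θ T η') η ∧
    fderiv ℝ (fun η' => θ T η') η =
      ∑ i ∈ Finset.range T,
        (chainComp (fun j => fderiv ℝ (fun t => Φ (t, η)) (θ j η)) (i + 1) T).comp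
          (fderiv ℝ (fun η' => Φ (θ i η, η')) η) := by
  have hΦd : Differentiable ℝ Φ := hΦ.differentiable one_ne_zero
  set A : ℕ → _ := fun j => fderiv ℝ (fun t => Φ (t, η)) (θ j η) with hA
  -- partial derivatives as compositions with inl/inr
  have hAe : ∀ j, A j = (fderiv ℝ Φ (θ j η, η)).comp
      (ContinuousLinearMap.inl ℝ _ _) := by
    intro j
    exact (((hΦd _).hasFDerivAt).comp _ (hasFDerivAt_prodMk_left (θ j η) η)).fderiv
  have hBe : ∀ j, fderiv ℝ (fun η' => Φ (θ j η, η')) η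
      = (fderiv ℝ Φ (θ j η, η)).comp (ContinuousLinearMap.inr ℝ _ _) := by
    intro j
    exact (((hΦd _).hasFDerivAt).comp _ (hasFDerivAt_prodMk_right (θ j η) η)).fderiv
  induction T with
  | zero =>
    refine ⟨by simp only [hθ0]; exact differentiableAt_const _, ?_⟩
    simp only [hθ0, fderiv_const, Finset.range_zero, Finset.sum_empty]
    exact fderiv_const_apply _
  | succ T ih =>
    obtain ⟨ihd, ihe⟩ := ih
    set D := fderiv ℝ (fun η' => θ T η') η with hD
    have hstep : HasFDerivAt (fun η' => θ (T + 1) η')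
        ((fderiv ℝ Φ (θ T η, η)).comp (D.prod (ContinuousLinearMap.id ℝ _))) η := by
      have h1 : HasFDerivAt (fun η' => (θ T η', η'))
          (D.prod (ContinuousLinearMap.id ℝ _)) η :=
        (ihd.hasFDerivAt).prodMk (hasFDerivAt_id η)
      have h2 : HasFDerivAt (fun η' => Φ (θ T η', η'))
          ((fderiv ℝ Φ (θ T η, η)).comp (D.prod (ContinuousLinearMap.id ℝ _))) η :=
        HasFDerivAt.comp η ((hΦd (θ T η, η)).hasFDerivAt) h1
      simpa only [← hθs] using h2
    refine ⟨hstep.differentiableAt, ?_⟩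
    rw [hstep.fderiv]
    -- split derivative of Φ
    have hsplit : (fderiv ℝ Φ (θ T η, η)).comp (D.prod (ContinuousLinearMap.id ℝ _))
        = (A T).comp D + fderiv ℝ (fun η' => Φ (θ T η, η')) η := by
      rw [hAe, hBe]
      ext v
      have : (D v, v) = ((D v, 0) + ((0 : EuclideanSpace ℝ (Fin P)), v)) := by
        simp
      simp only [ContinuousLinearMap.comp_apply, ContinuousLinearMap.prod_apply,
        ContinuousLinearMap.add_apply, ContinuousLinearMap.inl_apply,
        ContinuousLinearMap.inr_apply, ContinuousLinearMap.coe_id', id_eq, this,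
        map_add]
    rw [hsplit]
    rw [Finset.sum_range_succ]
    have hlast : chainComp A (T + 1) (T + 1) = ContinuousLinearMap.id ℝ _ := by
      simp [chainComp]
    have hchain : ∀ i ∈ Finset.range T,
        chainComp A (i + 1) (T + 1) = (A T).comp (chainComp A (i + 1) T) := by
      intro i hi
      have : ¬ (T + 1 ≤ i + 1) := by
        simp only [Finset.mem_range] at hi; omega
      simp [chainComp, this]
    rw [Finset.sum_congr rfl (fun i hi => by rw [hchain i hi])]
    rw [hlast]
    have : ∑ i ∈ Finset.range T,
        ((A T).comp (chainComp A (i + 1) T)).comp (fderiv ℝ (fun η' => Φ (θ i η, η')) η)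
        = (A T).comp D := by
      rw [ihe]
      ext v
      simp [ContinuousLinearMap.sum_apply]
    rw [this]
    simp
end

section
/- Let L : ℝ^P → ℝ be twice continuously differentiable (ContDiff ℝ 2) and let α ∈ ℝ. For each η ∈ ℝ^P define the gradient-descent iterates θ_0(η) = η and θ_{i+1}(η) = θ_i(η) - α • gradient L (θ_i(η)). Fix η and write H_i := fderiv ℝ (gradient L) (θ_i(η)) for the Hessian of L at the i-th iterate. Then for every T, the map η' ↦ θ_T(η') is differentiable at η and fderiv ℝ (fun η' => θ_T(η')) η = (id - α • H_{T-1}) ∘ (id - α • H_{T-2}) ∘ ⋯ ∘ (id - α • H_0), where id is the identity continuous linear map on ℝ^P; in particular for T = 0 the derivative is the identity. -/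
/-- MAML setting: for inner gradient descent
`θ 0 η = η`, `θ (i+1) η = θ i η - α • ∇L(θ i η)` on a twice continuously
differentiable meta-independent loss `L`, the derivative of `η' ↦ θ T η'` at
`η` is the ordered product `(id - α•H_{T-1}) ∘ ⋯ ∘ (id - α•H_0)` of matrices
`I - α ∂²L/∂θ²` along the trajectory, the identity when `T = 0`. -/
theorem stmt8 (P : ℕ) (L : EuclideanSpace ℝ (Fin P) → ℝ) (hL : ContDiff ℝ 2 L)
    (α : ℝ)
    (θ : ℕ → EuclideanSpace ℝ (Fin P) → EuclideanSpace ℝ (Fin P))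
    (hθ0 : ∀ η, θ 0 η = η)
    (hθs : ∀ i η, θ (i + 1) η = θ i η - α • gradient L (θ i η))
    (η : EuclideanSpace ℝ (Fin P)) (T : ℕ) :
    DifferentiableAt ℝ (fun η' => θ T η') η ∧
    fderiv ℝ (fun η' => θ T η') η =
      chainComp
        (fun i => ContinuousLinearMap.id ℝ (EuclideanSpace ℝ (Fin P)) -
          α • fderiv ℝ (gradient L) (θ i η)) 0 T := by
  have hgrad : Differentiable ℝ (gradient L) := by
    have h1 : ContDiff ℝ 1 (fderiv ℝ L) := hL.fderiv_right (le_refl _)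
    have heq : gradient L =
        fun x => (InnerProductSpace.toDual ℝ (EuclideanSpace ℝ (Fin P))).symm
          (fderiv ℝ L x) := rfl
    rw [heq]
    exact fun x =>
      ((InnerProductSpace.toDual ℝ (EuclideanSpace ℝ (Fin P))).symm.differentiable
        (fderiv ℝ L x)).comp x (h1.differentiable one_ne_zero x)
  induction T with
  | zero =>
      constructor
      · simpa [hθ0] using differentiableAt_id'
      · simp only [hθ0]
        rw [fderiv_id']
        rfl
  | succ T ih =>
      obtain ⟨hdiff, hfd⟩ := ih
      have hgθ : DifferentiableAt ℝ (fun η' => gradient L (θ T η')) η :=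
        (hgrad (θ T η)).comp η hdiff
      have heq : (fun η' => θ (T + 1) η') =
          fun η' => θ T η' - α • gradient L (θ T η') := by
        funext η'; exact hθs T η'
      constructor
      · rw [heq]; exact hdiff.sub (hgθ.const_smul α)
      · rw [heq, fderiv_fun_sub (g := fun η' => α • gradient L (θ T η')) hdiff (hgθ.const_smul α), fderiv_fun_const_smul hgθ]
        have hcomp : fderiv ℝ (fun η' => gradient L (θ T η')) η =
            (fderiv ℝ (gradient L) (θ T η)).comp (fderiv ℝ (fun η' => θ T η') η) :=
          fderiv_comp η (hgrad (θ T η)) hdiff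
        rw [hcomp, hfd]
        show _ = chainComp _ 0 (T + 1)
        rw [show chainComp
              (fun i => ContinuousLinearMap.id ℝ (EuclideanSpace ℝ (Fin P)) -
                α • fderiv ℝ (gradient L) (θ i η)) 0 (T + 1) =
            (ContinuousLinearMap.id ℝ (EuclideanSpace ℝ (Fin P)) -
                α • fderiv ℝ (gradient L) (θ T η)).comp
              (chainComp
                (fun i => ContinuousLinearMap.id ℝ (EuclideanSpace ℝ (Fin P)) -
                  α • fderiv ℝ (gradient L) (θ i η)) 0 T) by simp [chainComp]]
        ext x
        simp
end

section
/- Let Φ : ℝ^P × ℝ^M → ℝ^P be continuously differentiable (ContDiff ℝ 1), let θ₀ ∈ ℝ^P, and for each η ∈ ℝ^M define θ_0(η) = θ₀ and θ_{i+1}(η) = Φ (θ_i(η), η). Let V : ℝ^P → ℝ be differentiable at θ_T(η). Fix η and write A_i := fderiv ℝ (fun t => Φ (t, η)) (θ_i(η)) and B_i := fderiv ℝ (fun η' => Φ (θ_i(η), η')) η. Then the outer objective η' ↦ V (θ_T(η')) is differentiable at η with fderiv ℝ (fun η' => V (θ_T(η'))) η = ∑_{i=0}^{T-1} (fderiv ℝ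 V (θ_T(η))) ∘ (A_{T-1} ∘ ⋯ ∘ A_{i+1}) ∘ B_i, where the composition A_{T-1} ∘ ⋯ ∘ A_{i+1} is the identity when i = T-1. -/
/-- the total meta-gradient `dV/dη` of the validation loss `V`
through `T` unrolled inner updates `Φ` (truncated backpropagation through
time): with `A i := ∂Φ/∂θ` and `B i := ∂Φ/∂η` at the `i`-th iterate, the outer
objective `η' ↦ V (θ T η')` is differentiable at `η` with derivative
`∑_{i=0}^{T-1} dV/dθ_T ∘ (A_{T-1} ∘ ⋯ ∘ A_{i+1}) ∘ B_i`. -/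
theorem stmt10 (P M : ℕ)
    (Φ : EuclideanSpace ℝ (Fin P) × EuclideanSpace ℝ (Fin M) → EuclideanSpace ℝ (Fin P))
    (hΦ : ContDiff ℝ 1 Φ)
    (θ₀ : EuclideanSpace ℝ (Fin P))
    (θ : ℕ → EuclideanSpace ℝ (Fin M) → EuclideanSpace ℝ (Fin P))
    (hθ0 : ∀ η, θ 0 η = θ₀)
    (hθs : ∀ i η, θ (i + 1) η = Φ (θ i η, η))
    (η : EuclideanSpace ℝ (Fin M)) (T : ℕ)
    (V : EuclideanSpace ℝ (Fin P) → ℝ)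
    (hV : DifferentiableAt ℝ V (θ T η)) :
    DifferentiableAt ℝ (fun η' => V (θ T η')) η ∧
    fderiv ℝ (fun η' => V (θ T η')) η =
      ∑ i ∈ Finset.range T,
        ((fderiv ℝ V (θ T η)).comp
          (chainComp (fun j => fderiv ℝ (fun t => Φ (t, η)) (θ j η)) (i + 1) T)).comp
          (fderiv ℝ (fun η' => Φ (θ i η, η')) η) := by

  have hΦd : Differentiable ℝ Φ := hΦ.differentiable one_ne_zero
  set A : ℕ → (EuclideanSpace ℝ (Fin P) →L[ℝ] EuclideanSpace ℝ (Fin P)) :=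
    fun j => fderiv ℝ (fun t => Φ (t, η)) (θ j η) with hA
  set B : ℕ → (EuclideanSpace ℝ (Fin M) →L[ℝ] EuclideanSpace ℝ (Fin P)) :=
    fun i => fderiv ℝ (fun η' => Φ (θ i η, η')) η with hB
  have hAeq : ∀ j, A j = (fderiv ℝ Φ (θ j η, η)).comp
      (ContinuousLinearMap.inl ℝ (EuclideanSpace ℝ (Fin P)) (EuclideanSpace ℝ (Fin M))) := by
    intro j
    exact (((hΦd _).hasFDerivAt).comp (θ j η) (hasFDerivAt_prodMk_left (θ j η) η)).fderiv
  have hBeq : ∀ j, B j = (fderiv ℝ Φ (θ j η, η)).comp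
      (ContinuousLinearMap.inr ℝ (EuclideanSpace ℝ (Fin P)) (EuclideanSpace ℝ (Fin M))) := by
    intro j
    exact (((hΦd _).hasFDerivAt).comp η (hasFDerivAt_prodMk_right (θ j η) η)).fderiv
  have key : ∀ T, HasFDerivAt (fun η' => θ T η')
      (∑ i ∈ Finset.range T, (chainComp A (i + 1) T).comp (B i)) η := by
    intro T
    induction T with
    | zero =>
        simp only [Finset.range_zero, Finset.sum_empty, hθ0]
        exact hasFDerivAt_const θ₀ η
    | succ T ih =>
        set D := ∑ i ∈ Finset.range T, (chainComp A (i + 1) T).comp (B i) with hD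
        have h1 : HasFDerivAt (fun η' => (θ T η', η'))
            (D.prod (ContinuousLinearMap.id ℝ (EuclideanSpace ℝ (Fin M)))) η :=
          HasFDerivAt.prodMk ih (hasFDerivAt_id η)
        have h2 : HasFDerivAt Φ (fderiv ℝ Φ (θ T η, η)) (θ T η, η) := (hΦd _).hasFDerivAt
        have h3 : HasFDerivAt (Φ ∘ (fun η' => (θ T η', η')))
            ((fderiv ℝ Φ (θ T η, η)).comp
              (D.prod (ContinuousLinearMap.id ℝ (EuclideanSpace ℝ (Fin M))))) η :=
          HasFDerivAt.comp (f := fun η' => (θ T η', η')) η h2 h1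
        have h4 : HasFDerivAt (fun η' => θ (T + 1) η')
            ((fderiv ℝ Φ (θ T η, η)).comp
              (D.prod (ContinuousLinearMap.id ℝ (EuclideanSpace ℝ (Fin M))))) η := by
          simp only [hθs]; exact h3
        have hchain_last : chainComp A (T + 1) (T + 1) =
            ContinuousLinearMap.id ℝ (EuclideanSpace ℝ (Fin P)) := by
          simp [chainComp]
        have hchain : ∀ i, i < T → chainComp A (i + 1) (T + 1) =
            (A T).comp (chainComp A (i + 1) T) := by
          intro i hi
          simp only [chainComp]
          rw [if_neg (by omega)]
        have hAB : (fderiv ℝ Φ (θ T η, η)).comp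
              (D.prod (ContinuousLinearMap.id ℝ (EuclideanSpace ℝ (Fin M))))
            = (A T).comp D + B T := by
          refine ContinuousLinearMap.ext fun v => ?_
          have hv : ((D v, v) : EuclideanSpace ℝ (Fin P) × EuclideanSpace ℝ (Fin M))
              = (D v, 0) + (0, v) := by simp [Prod.ext_iff]
          simp only [ContinuousLinearMap.comp_apply, ContinuousLinearMap.prod_apply,
            ContinuousLinearMap.id_apply, ContinuousLinearMap.add_apply,
            hAeq, hBeq, ContinuousLinearMap.inl_apply, ContinuousLinearMap.inr_apply]
          rw [hv, map_add]
        have hsum : ∑ i ∈ Finset.range (T + 1), (chainComp A (i + 1) (T + 1)).comp (B i)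
            = (A T).comp D + B T := by
          rw [Finset.sum_range_succ, hchain_last, ContinuousLinearMap.id_comp]
          congr 1
          rw [Finset.sum_congr rfl (fun i hi => by
            rw [hchain i (Finset.mem_range.mp hi), ContinuousLinearMap.comp_assoc])]
          refine ContinuousLinearMap.ext fun v => ?_
          simp [ContinuousLinearMap.sum_apply, map_sum, hD]
        rw [hAB, ← hsum] at h4
        exact h4
  have hVT : HasFDerivAt V (fderiv ℝ V (θ T η)) (θ T η) := hV.hasFDerivAt
  have hcomp : HasFDerivAt (fun η' => V (θ T η'))
      ((fderiv ℝ V (θ T η)).comp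
        (∑ i ∈ Finset.range T, (chainComp A (i + 1) T).comp (B i))) η :=
    hVT.comp η (key T)
  refine ⟨hcomp.differentiableAt, ?_⟩
  rw [hcomp.fderiv]
  refine ContinuousLinearMap.ext fun v => ?_
  simp [ContinuousLinearMap.sum_apply, map_sum, hB]
end

section
/- Let L : ℝ^P × ℝ^M → ℝ be twice continuously differentiable (ContDiff ℝ 2), let α ∈ ℝ, and let θ : ℝ^M → ℝ^P be differentiable at η ∈ ℝ^M. Define the one-step gradient-descent update θ⁺ : ℝ^M → ℝ^P by θ⁺(η') = θ(η') - α • gradient (fun t => L (t, η')) (θ(η')). Then θ⁺ is differentiable at η and fderiv ℝ θ⁺ η = (id - α • H) ∘ (fderiv ℝ θ η) - α • X, where H := fderiv ℝ (fun t => gradient (fun s => L (s, η)) t) (θ η) is the Hessian ∂²L/∂θ² at (θ η, η), X := fderiv ℝ (fun η' => gradient (fun t => L (t, η')) (θ η)) η is the mixed second derivative ∂²L/∂η∂θ at (θ η, η), and id is the identity continuous linear map on ℝ^P. -/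
open ContinuousLinearMap
set_option maxHeartbeats 1000000
set_option linter.unnecessarySimpa false

/-- Equation (5) of the paper for a plain gradient-descent inner
update with meta-dependent loss: if `θ⁺(η') = θ(η') - α • ∇_θ L(θ(η'), η')`,
then `θ⁺` is differentiable at `η` with
`dθ⁺/dη = (id - α • ∂²L/∂θ²) ∘ dθ/dη - α • ∂²L/∂η∂θ`, where both second
derivatives are taken at `(θ η, η)`. -/
theorem stmt11 (P M : ℕ)
    (L : EuclideanSpace ℝ (Fin P) × EuclideanSpace ℝ (Fin M) → ℝ)
    (hL : ContDiff ℝ 2 L) (α : ℝ)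
    (θ : EuclideanSpace ℝ (Fin M) → EuclideanSpace ℝ (Fin P))
    (η : EuclideanSpace ℝ (Fin M))
    (hθ : DifferentiableAt ℝ θ η)
    (θplus : EuclideanSpace ℝ (Fin M) → EuclideanSpace ℝ (Fin P))
    (hdef : ∀ η', θplus η' = θ η' - α • gradient (fun t => L (t, η')) (θ η')) :
    DifferentiableAt ℝ θplus η ∧
    fderiv ℝ θplus η =
      ((ContinuousLinearMap.id ℝ (EuclideanSpace ℝ (Fin P)) -
          α • fderiv ℝ (fun t => gradient (fun s => L (s, η)) t) (θ η)).comp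
        (fderiv ℝ θ η)) -
      α • fderiv ℝ (fun η' => gradient (fun t => L (t, η')) (θ η)) η := by
  -- the "inclusion" maps
  set jP : (EuclideanSpace ℝ (Fin P)) →L[ℝ] (EuclideanSpace ℝ (Fin P)) × (EuclideanSpace ℝ (Fin M)) := (ContinuousLinearMap.id ℝ (EuclideanSpace ℝ (Fin P))).prod 0 with hjP
  set jM : (EuclideanSpace ℝ (Fin M)) →L[ℝ] (EuclideanSpace ℝ (Fin P)) × (EuclideanSpace ℝ (Fin M)) := (0 : (EuclideanSpace ℝ (Fin M)) →L[ℝ] (EuclideanSpace ℝ (Fin P))).prod (ContinuousLinearMap.id ℝ (EuclideanSpace ℝ (Fin M))) with hjM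
  -- the linear map turning a total derivative of L into the partial gradient
  set ψ : ((EuclideanSpace ℝ (Fin P)) →L[ℝ] ℝ) →L[ℝ] (EuclideanSpace ℝ (Fin P)) :=
    { toFun := fun f => (InnerProductSpace.toDual ℝ (EuclideanSpace ℝ (Fin P))).symm f,
      map_add' := fun f g => map_add _ f g,
      map_smul' := fun c f => by
        simpa [starRingEnd_apply] using
          (InnerProductSpace.toDual ℝ (EuclideanSpace ℝ (Fin P))).symm.map_smulₛₗ c f,
      cont := (InnerProductSpace.toDual ℝ (EuclideanSpace ℝ (Fin P))).symm.continuous } with hψ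
  set Φ : (((EuclideanSpace ℝ (Fin P)) × (EuclideanSpace ℝ (Fin M))) →L[ℝ] ℝ) →L[ℝ] (EuclideanSpace ℝ (Fin P)) :=
    (ψ : ((EuclideanSpace ℝ (Fin P)) →L[ℝ] ℝ) →L[ℝ] (EuclideanSpace ℝ (Fin P))).comp ((ContinuousLinearMap.compL ℝ (EuclideanSpace ℝ (Fin P)) ((EuclideanSpace ℝ (Fin P)) × (EuclideanSpace ℝ (Fin M))) ℝ).flip jP)
    with hΦ
  -- the gradient map G
  set G : (EuclideanSpace ℝ (Fin P)) × (EuclideanSpace ℝ (Fin M)) → (EuclideanSpace ℝ (Fin P)) := fun p => gradient (fun s => L (s, p.2)) p.1 with hG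
  have hLd : Differentiable ℝ L := hL.differentiable (by norm_num)
  -- partial fderiv
  have hpart : ∀ p : (EuclideanSpace ℝ (Fin P)) × (EuclideanSpace ℝ (Fin M)),
      fderiv ℝ (fun s => L (s, p.2)) p.1 = (fderiv ℝ L p).comp jP := by
    intro p
    have h1 : HasFDerivAt (fun s : (EuclideanSpace ℝ (Fin P)) => (s, p.2)) jP p.1 :=
      HasFDerivAt.prodMk (hasFDerivAt_id p.1) (hasFDerivAt_const p.2 p.1)
    have h2 : HasFDerivAt L (fderiv ℝ L p) p := (hLd p).hasFDerivAt
    have := (h2.comp p.1 (by simpa using h1))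
    exact this.fderiv
  have hGeq : G = fun p => Φ (fderiv ℝ L p) := by
    funext p
    simp only [hG, gradient, hpart p, hΦ, ContinuousLinearMap.comp_apply,
      ContinuousLinearMap.flip_apply, ContinuousLinearMap.compL_apply]
    rfl
  -- fderiv L is C¹ hence G is differentiable
  have hfd : ContDiff ℝ 1 (fderiv ℝ L) := hL.fderiv_right (by norm_num)
  have hGdiff : Differentiable ℝ G := by
    rw [hGeq]
    exact Φ.differentiable.comp (hfd.differentiable (by norm_num))
  set D : ((EuclideanSpace ℝ (Fin P)) × (EuclideanSpace ℝ (Fin M))) →L[ℝ] (EuclideanSpace ℝ (Fin P)) := fderiv ℝ G (θ η, η) with hD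
  have hGz : HasFDerivAt G D (θ η, η) := (hGdiff (θ η, η)).hasFDerivAt
  -- H and X
  have hH : fderiv ℝ (fun t => gradient (fun s => L (s, η)) t) (θ η) = D.comp jP := by
    have h1 : HasFDerivAt (fun t : (EuclideanSpace ℝ (Fin P)) => (t, η)) jP (θ η) :=
      HasFDerivAt.prodMk (hasFDerivAt_id (θ η)) (hasFDerivAt_const η (θ η))
    exact (hGz.comp (θ η) h1).fderiv
  have hX : fderiv ℝ (fun η' => gradient (fun t => L (t, η')) (θ η)) η = D.comp jM := by
    have h1 : HasFDerivAt (fun η' : (EuclideanSpace ℝ (Fin M)) => (θ η, η')) jM η :=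
      HasFDerivAt.prodMk (hasFDerivAt_const (θ η) η) (hasFDerivAt_id η)
    exact (hGz.comp η h1).fderiv
  -- the curve η' ↦ (θ η', η')
  set T : (EuclideanSpace ℝ (Fin M)) →L[ℝ] (EuclideanSpace ℝ (Fin P)) := fderiv ℝ θ η with hT
  have hk : HasFDerivAt (fun η' : (EuclideanSpace ℝ (Fin M)) => (θ η', η')) (T.prod (ContinuousLinearMap.id ℝ (EuclideanSpace ℝ (Fin M)))) η :=
    HasFDerivAt.prodMk hθ.hasFDerivAt (hasFDerivAt_id η)
  have hcomp : HasFDerivAt (fun η' => G (θ η', η'))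
      (D.comp (T.prod (ContinuousLinearMap.id ℝ (EuclideanSpace ℝ (Fin M))))) η :=
    HasFDerivAt.comp (x := η) (f := fun η' => (θ η', η')) (g := G) hGz hk
  have hplus : HasFDerivAt θplus
      (T - α • D.comp (T.prod (ContinuousLinearMap.id ℝ (EuclideanSpace ℝ (Fin M))))) η := by
    have : HasFDerivAt (fun η' => θ η' - α • G (θ η', η'))
        (T - α • D.comp (T.prod (ContinuousLinearMap.id ℝ (EuclideanSpace ℝ (Fin M))))) η :=
      hθ.hasFDerivAt.sub (hcomp.const_smul α)
    convert this using 1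
    funext η'
    exact hdef η'
  refine ⟨hplus.differentiableAt, ?_⟩
  rw [hplus.fderiv, hH, hX]
  refine ContinuousLinearMap.ext fun x => ?_
  simp only [ContinuousLinearMap.sub_apply, ContinuousLinearMap.smul_apply,
    ContinuousLinearMap.comp_apply, ContinuousLinearMap.coe_id', id_eq,
    ContinuousLinearMap.prod_apply, ContinuousLinearMap.id_apply,
    ContinuousLinearMap.zero_apply]
  have : (T x, x) = jP (T x) + jM x := by
    simp [hjP, hjM, Prod.ext_iff]
  rw [this, map_add, smul_add]
  abel
end
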